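/- Let Γ ⊢ p → t be a derivable sequent in the unnamed system OPT? with dim p ≥ 2. Then Γ, as a set of pairs, is the graph of a bijection between the set p⁺ of leaf addresses of p and the set t• of source addresses of t. -/

import Mathlib

set_option autoImplicit false
open Classical

@[reducible] def Addr : ℕ → Type
  | 0 => Unit
  | n + 1 => List (Addr n)

instance Addr.decEq : ∀ n, DecidableEq (Addr n)
  | 0 => fun a b => Decidable.isTrue (by cases a; cases b; rfl)
  | n + 1 => @instDecidableEqList _ (Addr.decEq n)

def Addr.eps : ∀ n, Addr n
  | 0 => ()
  | _ + 1 => ([] : List _)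

def Addr.cat : ∀ {n}, Addr n → Addr n → Addr n
  | 0, _, _ => ()
  | _ + 1, a, b => List.append a b

def Addr.le : ∀ {n}, Addr n → Addr n → Prop
  | 0, _, _ => True
  | _ + 1, a, b => List.IsPrefix a b

inductive PreOp : ℕ → Type
  | null : ∀ {n}, PreOp n
  | point : PreOp 0
  | nd {n : ℕ} (f : Addr n → PreOp n) : PreOp (n + 1)
  | degen {n : ℕ} (q : PreOp n) : PreOp (n + 2)

namespace PreOp

def srcFn : ∀ {n}, PreOp (n + 1) → Addr n → PreOp n
  | _, nd f => f
  | _, _ => fun _ => null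

def nodes {n : ℕ} (p : PreOp (n + 1)) : Set (Addr n) := {a | p.srcFn a ≠ null}

def src {n : ℕ} (p : PreOp (n + 1)) (a : Addr n) : PreOp n := p.srcFn a

def IsDeg : ∀ {n}, PreOp n → Prop
  | _, degen _ => True
  | _, _ => False

def leaves : ∀ {n}, PreOp (n + 1) → Set (Addr n)
  | 0, _ => ∅
  | _ + 1, degen _ => {Addr.eps _}
  | _ + 1, nd f =>
      {l | ∃ a b, f a ≠ null ∧ (f a).srcFn b ≠ null ∧ l = List.concat a b ∧ f l = null}
  | _ + 1, _ => ∅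

def graftI : ∀ {n}, PreOp (n + 1) → Addr n → PreOp n → PreOp (n + 1)
  | _, nd f, r, q => nd (fun a => if a = r then q else f a)
  | _, p, _, _ => p

def corolla {n : ℕ} (p : PreOp n) : PreOp (n + 1) :=
  nd (fun a => if a = Addr.eps n then p else null)

/-- `e_[l] p = s_[b] s_[a] p` for a leaf address `l = [a[b]]`. -/
def edge {m : ℕ} (p : PreOp (m + 2)) (l : Addr (m + 1)) : PreOp m :=
  match (l : List (Addr m)).getLast? with
  | none => null
  | some b => (p.srcFn (List.dropLast l)).srcFn b

/-- The type of the target of a sequent whose subject has dimension `n`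
(`∅` -- encoded as `PUnit` -- in dimension `0`). -/
@[reducible] def Tgt : ℕ → Type
  | 0 => PUnit
  | n + 1 => PreOp n

/-- The type of contexts for sequents whose subject has dimension `n`: a set of pairs
`[l]/[q]` of an `(n-1)`-address and an `(n-2)`-address (trivial for `n ≤ 1`). -/
@[reducible] def LCtx : ℕ → Type
  | 0 => PUnit
  | 1 => PUnit
  | n + 2 => Set (Addr (n + 1) × Addr n)

/-- Address rewriting used in substitution: if `a = r ++ [b] ++ a'` with `[x]/[b] ∈ Υ`,
rewrite `a` to `r ++ x ++ a'`; otherwise leave `a` unchanged. -/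
noncomputable def chiN {k : ℕ} (Υ : Set (Addr (k + 1) × Addr k)) (r a : Addr (k + 1)) :
    Addr (k + 1) :=
  match (a : List (Addr k))[(r : List (Addr k)).length]? with
  | none => a
  | some b =>
    if h : (a : List (Addr k)).take (r : List (Addr k)).length = r ∧
        ∃ x : Addr (k + 1), (x, b) ∈ Υ then
      (List.append (List.append r (choose h.2))
        ((a : List (Addr k)).drop ((r : List (Addr k)).length + 1)) : List (Addr k))
    else a

/-- Address rewriting used when substituting a degenerate preopetope: if `a = r ++ [b] ++ a'`,
rewrite `a` to `r ++ a'`. -/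
def chiD {k : ℕ} (r a : Addr (k + 1)) : Addr (k + 1) :=
  if (a : List (Addr k)).take (r : List (Addr k)).length = r ∧
      (r : List (Addr k)).length < (a : List (Addr k)).length then
    (List.append r ((a : List (Addr k)).drop ((r : List (Addr k)).length + 1)) : List (Addr k))
  else a

/-- Substitution `t ▫_[r] q` (Definition 4.1.6), relative to the context `Υ` of the
sequent of `q`. -/
noncomputable def psub :
    ∀ {m}, PreOp (m + 1) → Addr m → PreOp (m + 1) → LCtx (m + 1) → PreOp (m + 1)
  | 0, _, _, q, _ => q
  | _ + 1, nd g, r, degen w, _ =>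
      if ∀ b, g b ≠ null → b = r then degen w
      else nd (fun a =>
        if h : ∃ b, b ≠ r ∧ g b ≠ null ∧ chiD r b = a then g (choose h) else null)
  | k + 1, nd g, r, nd h, Υ =>
      nd (fun a =>
        if h1 : ∃ s, h s ≠ null ∧ a = List.append r s then h (choose h1)
        else if h2 : ∃ b, b ≠ r ∧ g b ≠ null ∧
            chiN (Υ : Set (Addr (k + 1) × Addr k)) r b = a then g (choose h2)
        else null)
  | _ + 1, t, _, _, _ => t

/-- Rewriting of the remaining context entries in the `graft` rule: a pair `[a]/[r[y]r']`
with `[x]/[y] ∈ Υ` is rewritten to `[a]/[r x r']`. -/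
noncomputable def rewriteCtx :
    ∀ {m}, LCtx (m + 1) → Addr m → Set (Addr (m + 1) × Addr m) → Set (Addr (m + 1) × Addr m)
  | 0, _, _, Γ => Γ
  | k + 1, Υ, r, Γ =>
      {ab | ∃ xy ∈ Γ, ab = (xy.1, chiN (Υ : Set (Addr (k + 1) × Addr k)) r xy.2)}

end PreOp

/-- Derivability of sequents `Γ ⊢ p → t` in the unnamed system `OPT?` (Figure 4.1.1). -/
inductive Derives : ∀ n, PreOp.LCtx n → PreOp n → PreOp.Tgt n → Prop
  | point : Derives 0 PUnit.unit PreOp.point PUnit.unit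
  | degen {n : ℕ} {Γ : PreOp.LCtx n} {p : PreOp n} {t : PreOp.Tgt n} :
      Derives n Γ p t →
      Derives (n + 2) {(Addr.eps (n + 1), Addr.eps n)} (PreOp.degen p) (PreOp.corolla p)
  | shift0 {Γ : PreOp.LCtx 0} {p : PreOp 0} {t : PreOp.Tgt 0} :
      Derives 0 Γ p t →
      Derives 1 PUnit.unit (PreOp.corolla p) p
  | shiftS {n : ℕ} {Γ : PreOp.LCtx (n + 1)} {p : PreOp (n + 1)} {t : PreOp.Tgt (n + 1)} :
      Derives (n + 1) Γ p t →
      Derives (n + 2) {ab | ∃ a ∈ p.nodes, ab = (([a] : List (Addr n)), a)}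
        (PreOp.corolla p) p
  | graft {m : ℕ} {Γ : Set (Addr (m + 1) × Addr m)} {p : PreOp (m + 2)} {t : PreOp (m + 1)}
      {l : Addr (m + 1)} {r : Addr m} {q : PreOp (m + 1)} {Υ : PreOp.LCtx (m + 1)}
      {u : PreOp m} :
      Derives (m + 2) (insert (l, r) Γ) p t →
      (l, r) ∉ Γ →
      Derives (m + 1) Υ q u →
      PreOp.edge p l = u →
      Derives (m + 2)
        (PreOp.rewriteCtx Υ r Γ ∪
          {ab | ∃ s ∈ q.nodes, ab = (List.concat l s, Addr.cat r s)})
        (p.graftI l q) (PreOp.psub t r q Υ)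

open PreOp

theorem PreOp.nd_ne_null {n : ℕ} (f : Addr n → PreOp n) : nd f ≠ null := by
  intro h; cases h

theorem PreOp.degen_ne_null {n : ℕ} (q : PreOp n) : degen q ≠ null := by
  intro h; cases h

theorem PreOp.corolla_ne_null {n : ℕ} (p : PreOp n) : corolla p ≠ null :=
  PreOp.nd_ne_null _

theorem PreOp.srcFn_nd {n : ℕ} (f : Addr n → PreOp n) : (nd f).srcFn = f := rfl

/-- One-level tree validity of a function of sources over list addresses. -/
def Valid {n : ℕ} (f : Addr (n + 1) → PreOp (n + 1)) : Prop :=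
  ∀ (a : Addr (n + 1)) (b : Addr n), f (List.concat a b) ≠ null →
    f a ≠ null ∧ (f a).srcFn b ≠ null

/-- Wellformedness of derivable preopetopes (one level). -/
def GoodP : ∀ {n : ℕ}, PreOp n → Prop
  | 0, p => p = point
  | 1, p => p = corolla point
  | _ + 2, p => p ≠ null ∧ ∀ f, p = nd f → (f (Addr.eps _) ≠ null ∧ Valid f)

/-- The full induction motive. -/
def Mot : ∀ n, LCtx n → PreOp n → Tgt n → Prop
  | 0, _, p, _ => GoodP p
  | 1, _, p, t => GoodP p ∧ t = point
  | m + 2, Γ, p, t => GoodP p ∧ GoodP t ∧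
      (∀ x ∈ (Γ : Set (Addr (m + 1) × Addr m)), x.1 ∈ leaves p ∧ x.2 ∈ nodes t) ∧
      (∀ l ∈ leaves p, ∃! r, (l, r) ∈ (Γ : Set (Addr (m + 1) × Addr m))) ∧
      (∀ r ∈ nodes t, ∃! l, (l, r) ∈ (Γ : Set (Addr (m + 1) × Addr m))) ∧
      (∀ x y, (x, y) ∈ (Γ : Set (Addr (m + 1) × Addr m)) → ∀ f, p = nd f →
        t.srcFn y = edge p x)

theorem GoodP.ne_null : ∀ {n : ℕ} {p : PreOp n}, GoodP p → p ≠ null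
  | 0, _, h => by rw [h]; exact fun hh => by cases hh
  | 1, _, h => by rw [h]; exact corolla_ne_null _
  | _ + 2, _, h => h.1

/-! ### List helpers -/

theorem list_decomp {α : Type _} {a r : List α} {c : α}
    (h1 : a.take r.length = r) (h2 : a[r.length]? = some c) :
    a = r ++ c :: a.drop (r.length + 1) := by
  obtain ⟨hlt, hget⟩ := List.getElem?_eq_some_iff.mp h2
  conv_lhs => rw [← List.take_append_drop r.length a]
  rw [h1]
  congr 1
  rw [List.drop_eq_getElem_cons hlt, hget]

theorem take_of_append {α : Type _} (r : List α) (d : List α) :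
    (r ++ d).take r.length = r := List.take_left' rfl

theorem get?_of_append {α : Type _} (r d : List α) (c : α) :
    (r ++ c :: d)[r.length]? = some c := by
  simp

theorem drop_of_append {α : Type _} (r d : List α) (c : α) :
    (r ++ c :: d).drop (r.length + 1) = d := by
  have : r ++ c :: d = (r ++ [c]) ++ d := by simp
  rw [this]
  exact List.drop_left' (by simp)

theorem concat_ne_nil {α : Type _} (a : List α) (b : α) : List.concat a b ≠ [] := by
  simp

theorem concat_inj {α : Type _} {a a' : List α} {b b' : α}
    (h : List.concat a b = List.concat a' b') : a = a' ∧ b = b' := by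
  simp only [List.concat_eq_append] at h
  exact ⟨List.append_inj_left' h rfl, by
    have := List.append_inj_right' h rfl; simpa using this⟩

theorem prefix_concat_cases {α : Type _} {x a : List α} {b : α}
    (h : x <+: List.concat a b) : x = List.concat a b ∨ x <+: a := by
  rcases eq_or_lt_of_le (h.length_le) with he | hl
  · exact Or.inl (h.eq_of_length he)
  · right
    refine List.prefix_of_prefix_length_le h (by simp [List.concat_eq_append]) ?_
    simp only [List.concat_eq_append, List.length_append, List.length_cons,
      List.length_nil] at hl ⊢
    omega

/-! ### Downward closure -/

theorem Valid.dc {n : ℕ} {f : Addr (n + 1) → PreOp (n + 1)} (hv : Valid f) :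
    ∀ (b : List (Addr n)), f b ≠ null → ∀ a, a <+: b → f a ≠ null := by
  intro b
  induction b using List.reverseRecOn with
  | nil =>
    intro hb a ha
    rwa [List.prefix_nil.mp ha]
  | append_singleton b c ih =>
    intro hb a ha
    rw [← List.concat_eq_append] at hb ha
    rcases prefix_concat_cases ha with h | h
    · rwa [h]
    · exact ih (hv b c hb).1 a h

/-! ### Leaves of a non-degenerate preopetope -/

theorem mem_leaves_nd {n : ℕ} {f : Addr (n + 1) → PreOp (n + 1)} {x : Addr (n + 1)} :
    x ∈ leaves (nd f) ↔
      ∃ a b, f a ≠ null ∧ (f a).srcFn b ≠ null ∧ x = List.concat a b ∧ f x = null :=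
  Iff.rfl

theorem leaves_nd_ne_nil {n : ℕ} {f : Addr (n + 1) → PreOp (n + 1)} {x : Addr (n + 1)}
    (h : x ∈ leaves (nd f)) : x ≠ ([] : List (Addr n)) := by
  obtain ⟨a, b, _, _, hx, _⟩ := h
  rw [hx]; exact concat_ne_nil a b

theorem leaves_nd_null {n : ℕ} {f : Addr (n + 1) → PreOp (n + 1)} {x : Addr (n + 1)}
    (h : x ∈ leaves (nd f)) : f x = null := by
  obtain ⟨a, b, _, _, _, hn⟩ := h; exact hn

theorem leaf_not_prefix_node {n : ℕ} {f : Addr (n + 1) → PreOp (n + 1)} (hv : Valid f)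
    {x s : Addr (n + 1)} (hx : x ∈ leaves (nd f)) (hs : f s ≠ null) :
    ¬ (x : List (Addr n)) <+: s := fun hp =>
  (hv.dc s hs x hp) (leaves_nd_null hx)

theorem leaves_antichain {n : ℕ} {f : Addr (n + 1) → PreOp (n + 1)} (hv : Valid f)
    {x₁ x₂ : Addr (n + 1)} (h1 : x₁ ∈ leaves (nd f)) (h2 : x₂ ∈ leaves (nd f))
    (hp : (x₁ : List (Addr n)) <+: x₂) : x₁ = x₂ := by
  obtain ⟨a, b, ha, _, hx2, _⟩ := h2
  rw [hx2] at hp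
  rcases prefix_concat_cases hp with h | h
  · rw [h, ← hx2]
  · exact absurd (leaves_nd_null h1) (hv.dc a ha x₁ h)

theorem dropLast_node_of_leaf {n : ℕ} {f : Addr (n + 1) → PreOp (n + 1)} {x : Addr (n + 1)}
    (h : x ∈ leaves (nd f)) :
    f ((x : List (Addr n)).dropLast) ≠ null ∧
      (f ((x : List (Addr n)).dropLast)).srcFn (x.getLast (leaves_nd_ne_nil h)) ≠ null := by
  obtain ⟨a, b, ha, hb, hx, _⟩ := h
  subst hx
  simp only [List.concat_eq_append, List.dropLast_concat]
  constructor
  · exact ha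
  · convert hb using 2
    exact List.getLast_concat

/-! ### Leaves after improper grafting -/

theorem graftI_nd {n : ℕ} (f : Addr (n + 1) → PreOp (n + 1)) (l : Addr (n + 1))
    (q : PreOp (n + 1)) :
    graftI (nd f) l q = nd (fun a => if a = l then q else f a) := rfl

theorem leaves_graftI {n : ℕ} {f : Addr (n + 1) → PreOp (n + 1)} (hv : Valid f)
    {l : Addr (n + 1)} (hl : l ∈ leaves (nd f)) {q : PreOp (n + 1)} (hq : q ≠ null) :
    ∀ x, x ∈ leaves (graftI (nd f) l q) ↔
      ((x ∈ leaves (nd f) ∧ x ≠ l) ∨ ∃ s ∈ nodes q, x = List.concat l s) := by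
  intro x
  rw [graftI_nd]
  set f' := fun a => if a = l then q else f a with hf'
  have hfl : f l = null := leaves_nd_null hl
  constructor
  · rintro ⟨a, b, ha, hb, hx, hnull⟩
    have hxl : x ≠ l := by
      intro he
      rw [he] at hnull
      simp only [hf', if_pos rfl] at hnull
      exact hq hnull
    simp only [hf', if_neg hxl] at hnull
    by_cases hal : a = l
    · subst hal
      simp only [hf', if_pos rfl] at hb
      exact Or.inr ⟨b, hb, hx⟩
    · simp only [hf', if_neg hal] at ha hb
      exact Or.inl ⟨⟨a, b, ha, hb, hx, hnull⟩, hxl⟩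
  · rintro (⟨⟨a, b, ha, hb, hx, hnull⟩, hxl⟩ | ⟨s, hs, hx⟩)
    · have hal : a ≠ l := fun he => ha (he ▸ hfl)
      exact ⟨a, b, by simp [hf', if_neg hal, ha], by simp [hf', if_neg hal, hb],
        hx, by simp [hf', if_neg hxl, hnull]⟩
    · subst hx
      have hxl : List.concat l s ≠ l := by
        intro he
        have := congrArg List.length he
        simp [List.concat_eq_append] at this
      have hfx : f (List.concat l s) = null := by
        by_contra hfx
        exact (hv.dc _ hfx l (List.prefix_concat s l)) hfl
      refine ⟨l, s, ?_, ?_, rfl, ?_⟩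
      · simp only [hf', if_pos rfl]; exact hq
      · simp only [hf', if_pos rfl]; exact hs
      · simp only [hf', if_neg hxl]; exact hfx

/-! ### Evaluation of the address rewritings -/

section chi
variable {k : ℕ} (Υ : Set (Addr (k + 1) × Addr k)) (r : Addr (k + 1))

theorem chiN_eq_self_of_short {a : Addr (k + 1)}
    (h : (a : List (Addr k)).length ≤ (r : List (Addr k)).length) :
    chiN Υ r a = a := by
  unfold chiN
  rw [List.getElem?_eq_none h]

theorem chiN_eq_self_of_take_ne {a : Addr (k + 1)}
    (h : (a : List (Addr k)).take (r : List (Addr k)).length ≠ r) :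
    chiN Υ r a = a := by
  unfold chiN
  cases hg : (a : List (Addr k))[(r : List (Addr k)).length]? with
  | none => rfl
  | some c => exact dif_neg fun hc => h hc.1

theorem chiN_eq_self_of_not_mem {a : Addr (k + 1)} {c : Addr k}
    (hget : (a : List (Addr k))[(r : List (Addr k)).length]? = some c)
    (hx : ¬ ∃ x : Addr (k + 1), (x, c) ∈ Υ) :
    chiN Υ r a = a := by
  unfold chiN
  rw [hget]
  exact dif_neg fun hc => hx hc.2

theorem chiN_eq_of_mem {c : Addr k} (d : List (Addr k))
    (hx : ∃ x : Addr (k + 1), (x, c) ∈ Υ) :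
    chiN Υ r ((r : List (Addr k)) ++ c :: d) =
      ((r : List (Addr k)) ++ (Classical.choose hx : List (Addr k)) ++ d : List (Addr k)) := by
  simp only [chiN, get?_of_append]
  rw [dif_pos ⟨take_of_append _ _, hx⟩]
  rw [drop_of_append]
  rfl

theorem chiD_of_pos {a : Addr (k + 1)}
    (h : (a : List (Addr k)).take (r : List (Addr k)).length = r ∧
      (r : List (Addr k)).length < (a : List (Addr k)).length) :
    chiD r a = ((r : List (Addr k)) ++
      (a : List (Addr k)).drop ((r : List (Addr k)).length + 1) : List (Addr k)) := by
  unfold chiD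
  rw [if_pos h]
  rfl

theorem chiD_of_neg {a : Addr (k + 1)}
    (h : ¬ ((a : List (Addr k)).take (r : List (Addr k)).length = r ∧
      (r : List (Addr k)).length < (a : List (Addr k)).length)) :
    chiD r a = a := by
  unfold chiD
  rw [if_neg h]

end chi

/-! ### The graft case: analysis of `chiN` on the nodes of `t` -/

theorem prefix_iff_take {α : Type _} {r b : List α} :
    r <+: b ↔ b.take r.length = r := by
  constructor
  · intro h
    obtain ⟨d, rfl⟩ := h
    exact take_of_append r d
  · intro h
    rw [← h]
    exact List.take_prefix _ _

section graftSucc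

variable {k : ℕ} {Υ : Set (Addr (k + 1) × Addr k)} {r : Addr (k + 1)}
  {g : Addr (k + 1) → PreOp (k + 1)} {u : PreOp (k + 1)} {q : PreOp (k + 2)}

/-- Decomposition of nodes of `t` properly extending `r`. -/
theorem node_ext (hg : Valid g) (hgr : g r = u) {b : Addr (k + 1)}
    (hb : g b ≠ null) (hpre : (r : List (Addr k)) <+: b) (hbr : b ≠ r) :
    ∃ c d, (b : List (Addr k)) = (r : List (Addr k)) ++ c :: d ∧ c ∈ nodes u := by
  obtain ⟨d0, hd0⟩ := hpre
  have hd0ne : d0 ≠ [] := by rintro rfl; exact hbr (by rw [← hd0]; simp)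
  obtain ⟨c, d, rfl⟩ := List.exists_cons_of_ne_nil hd0ne
  refine ⟨c, d, hd0.symm, ?_⟩
  have hpre2 : ((r : List (Addr k)) ++ [c] : List (Addr k)) <+: b :=
    ⟨d, by rw [← hd0]; simp⟩
  have h1 : g ((r : List (Addr k)) ++ [c] : List (Addr k)) ≠ null :=
    hg.dc b hb _ hpre2
  have h2 := hg r c (by rw [List.concat_eq_append]; exact h1)
  rw [hgr] at h2
  exact h2.2

variable (HΥ1 : ∀ xy ∈ Υ, xy.1 ∈ leaves q ∧ xy.2 ∈ nodes u)
  (HΥ2 : ∀ x ∈ leaves q, ∃! c, (x, c) ∈ Υ)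
  (HΥ3 : ∀ c ∈ nodes u, ∃! x : Addr (k + 1), (x, c) ∈ Υ)

include HΥ1 HΥ3

/-- Value of `chiN` on nodes of `t` distinct from `r`. -/
theorem chiN_node_cases (hg : Valid g) (hgr : g r = u) {b : Addr (k + 1)}
    (hb : g b ≠ null) (hbr : b ≠ r) :
    (¬ (r : List (Addr k)) <+: b ∧ chiN Υ r b = b) ∨
    (∃ c d x, (b : List (Addr k)) = (r : List (Addr k)) ++ c :: d ∧
      (x, c) ∈ Υ ∧ (∀ x', (x', c) ∈ Υ → x' = x) ∧ x ∈ leaves q ∧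
      chiN Υ r b = ((r : List (Addr k)) ++ (x : List (Addr k)) ++ d :
        List (Addr k))) := by
  by_cases hpre : (r : List (Addr k)) <+: b
  · right
    obtain ⟨c, d, hbd, hcu⟩ := node_ext hg hgr hb hpre hbr
    obtain ⟨x0, hx0, hx0u⟩ := HΥ3 c hcu
    have hx : ∃ x : Addr (k + 1), (x, c) ∈ Υ := ⟨x0, hx0⟩
    have hspec := Classical.choose_spec hx
    refine ⟨c, d, Classical.choose hx, hbd, hspec, ?_, (HΥ1 _ hspec).1, ?_⟩
    · intro x' hx'
      rw [hx0u _ hx', ← hx0u _ hspec]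
    · rw [show b = ((r : List (Addr k)) ++ c :: d : List (Addr k)) from hbd]
      exact chiN_eq_of_mem Υ r d hx
  · left
    refine ⟨hpre, chiN_eq_self_of_take_ne Υ r ?_⟩
    intro h
    exact hpre (prefix_iff_take.mpr h)

variable (hqac : ∀ x1 x2, x1 ∈ leaves q → x2 ∈ leaves q →
    (x1 : List (Addr k)) <+: x2 → x1 = x2)

include HΥ2 hqac

/-- `chiN` is injective on the nodes of `t` distinct from `r`. -/
theorem chiN_inj (hg : Valid g) (hgr : g r = u) {b1 b2 : Addr (k + 1)}
    (hb1 : g b1 ≠ null) (hbr1 : b1 ≠ r) (hb2 : g b2 ≠ null) (hbr2 : b2 ≠ r)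
    (heq : chiN Υ r b1 = chiN Υ r b2) : b1 = b2 := by
  rcases chiN_node_cases HΥ1 HΥ3 hg hgr hb1 hbr1 with ⟨hp1, he1⟩ | ⟨c1, d1, x1, hd1, hm1, hu1, hl1, he1⟩ <;>
    rcases chiN_node_cases HΥ1 HΥ3 hg hgr hb2 hbr2 with ⟨hp2, he2⟩ | ⟨c2, d2, x2, hd2, hm2, hu2, hl2, he2⟩
  · rw [← he1, heq, he2]
  · exfalso
    rw [he1, he2] at heq
    exact hp1 (heq ▸ ⟨(x2 : List (Addr k)) ++ d2, by simp⟩)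
  · exfalso
    rw [he1, he2] at heq
    exact hp2 (heq.symm ▸ ⟨(x1 : List (Addr k)) ++ d1, by simp⟩)
  · rw [he1, he2] at heq
    simp only [List.append_assoc] at heq
    have hxd : (x1 : List (Addr k)) ++ d1 = (x2 : List (Addr k)) ++ d2 :=
      List.append_cancel_left heq
    have hxx : x1 = x2 := by
      rcases le_total (x1 : List (Addr k)).length (x2 : List (Addr k)).length with
        hle | hle
      · exact hqac _ _ hl1 hl2 (List.prefix_of_prefix_length_le
          (hxd ▸ (x1 : List (Addr k)).prefix_append d1)
          ((x2 : List (Addr k)).prefix_append d2) hle)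
      · exact (hqac _ _ hl2 hl1 (List.prefix_of_prefix_length_le
          (hxd.symm ▸ (x2 : List (Addr k)).prefix_append d2)
          ((x1 : List (Addr k)).prefix_append d1) hle)).symm
    subst hxx
    have hdd : d1 = d2 := List.append_cancel_left hxd
    have hcc : c1 = c2 := by
      obtain ⟨c0, hc0, hc0u⟩ := HΥ2 x1 hl1
      rw [hc0u _ hm1, hc0u _ hm2]
    rw [hd1, hd2, hcc, hdd]

variable (hqln : ∀ x s, x ∈ leaves q → q.srcFn s ≠ null → ¬ (x : List (Addr k)) <+: s)

omit HΥ2 hqac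
include hqln

/-- Images of `chiN` on nodes of `t` avoid the addresses `r ++ s`, `s` a node of `q`. -/
theorem chiN_avoid (hg : Valid g) (hgr : g r = u) {b : Addr (k + 1)}
    (hb : g b ≠ null) (hbr : b ≠ r) {s : Addr (k + 1)} (hs : q.srcFn s ≠ null) :
    chiN Υ r b ≠ ((r : List (Addr k)) ++ s : List (Addr k)) := by
  rcases chiN_node_cases HΥ1 HΥ3 hg hgr hb hbr with ⟨hp, he⟩ | ⟨c, d, x, hd, hm, hu, hl, he⟩
  · rw [he]
    intro hbs
    exact hp ⟨s, hbs.symm⟩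
  · rw [he]
    intro hbs
    simp only [List.append_assoc] at hbs
    have : (x : List (Addr k)) ++ d = s := List.append_cancel_left hbs
    exact hqln x s hl hs (this ▸ (x : List (Addr k)).prefix_append d)

end graftSucc

/-! ### Evaluation of `psub` in the non-degenerate case -/

section psubNd

variable {k : ℕ} {Υ : Set (Addr (k + 1) × Addr k)} {r : Addr (k + 1)}
  {g : Addr (k + 1) → PreOp (k + 1)} {hq : Addr (k + 1) → PreOp (k + 1)}
  {u : PreOp (k + 1)}

theorem psub_nd_def :
    psub (nd g) r (nd hq) Υ = nd (fun a =>
      if h1 : ∃ s, hq s ≠ null ∧ a = List.append r s then hq (Classical.choose h1)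
      else if h2 : ∃ b, b ≠ r ∧ g b ≠ null ∧
          chiN (Υ : Set (Addr (k + 1) × Addr k)) r b = a then g (Classical.choose h2)
      else null) := rfl

theorem psub_nd_eval_new {s : Addr (k + 1)} (hs : hq s ≠ null) :
    (psub (nd g) r (nd hq) Υ).srcFn (List.append r s) = hq s := by
  rw [psub_nd_def, srcFn_nd]
  have hw : ∃ s', hq s' ≠ null ∧ List.append r s = List.append r s' := ⟨s, hs, rfl⟩
  rw [dif_pos hw]
  have hsp := Classical.choose_spec hw
  have : Classical.choose hw = s := by
    have h2 := hsp.2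
    exact (List.append_cancel_left (show (r : List (Addr k)) ++ s =
      (r : List (Addr k)) ++ Classical.choose hw from h2)).symm
  rw [this]

theorem psub_nd_eval_none {a : Addr (k + 1)}
    (hne : (psub (nd g) r (nd hq) Υ).srcFn a ≠ null) :
    (∃ s, hq s ≠ null ∧ a = List.append r s) ∨
      (∃ b, b ≠ r ∧ g b ≠ null ∧ chiN Υ r b = a) := by
  rw [psub_nd_def, srcFn_nd] at hne
  by_cases h1 : ∃ s, hq s ≠ null ∧ a = List.append r s
  · exact Or.inl h1
  rw [dif_neg h1] at hne
  by_cases h2 : ∃ b, b ≠ r ∧ g b ≠ null ∧ chiN Υ r b = a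
  · exact Or.inr h2
  · rw [dif_neg h2] at hne; exact absurd rfl hne

variable (HΥ1 : ∀ xy ∈ Υ, xy.1 ∈ leaves (nd hq : PreOp (k + 2)) ∧ xy.2 ∈ nodes u)
  (HΥ2 : ∀ x ∈ leaves (nd hq : PreOp (k + 2)), ∃! c, (x, c) ∈ Υ)
  (HΥ3 : ∀ c ∈ nodes u, ∃! x : Addr (k + 1), (x, c) ∈ Υ)
  (hvq : Valid hq) (hg : Valid g) (hgr : g r = u)

include HΥ1 HΥ2 HΥ3 hvq hg hgr

theorem psub_nd_eval_old {b : Addr (k + 1)} (hb : g b ≠ null) (hbr : b ≠ r) :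
    (psub (nd g) r (nd hq) Υ).srcFn (chiN Υ r b) = g b := by
  rw [psub_nd_def, srcFn_nd]
  have h1 : ¬ ∃ s, hq s ≠ null ∧ chiN Υ r b = List.append r s := by
    rintro ⟨s, hs, habs⟩
    exact chiN_avoid HΥ1 HΥ3 (fun x s hx hs => leaf_not_prefix_node hvq hx hs)
      hg hgr hb hbr (s := s) hs habs
  rw [dif_neg h1]
  have hw : ∃ b', b' ≠ r ∧ g b' ≠ null ∧ chiN Υ r b' = chiN Υ r b := ⟨b, hbr, hb, rfl⟩
  rw [dif_pos hw]
  have hsp := Classical.choose_spec hw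
  have : Classical.choose hw = b :=
    chiN_inj HΥ1 HΥ2 HΥ3 (fun x1 x2 h1 h2 hp => leaves_antichain hvq h1 h2 hp)
      hg hgr hsp.2.1 hsp.1 hb hbr hsp.2.2
  rw [this]

end psubNd

/-! ### Evaluation of `psub` in the degenerate case -/

section psubDeg

variable {k : ℕ} {Υ : Set (Addr (k + 1) × Addr k)} {r : Addr (k + 1)}
  {g : Addr (k + 1) → PreOp (k + 1)} {w : PreOp k} {u : PreOp (k + 1)}

theorem chiD_node_cases (hg : Valid g) (hgr : g r = u) {b : Addr (k + 1)}
    (hb : g b ≠ null) (hbr : b ≠ r) :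
    (¬ (r : List (Addr k)) <+: b ∧ chiD r b = b) ∨
    (∃ c d, (b : List (Addr k)) = (r : List (Addr k)) ++ c :: d ∧ c ∈ nodes u ∧
      chiD r b = ((r : List (Addr k)) ++ d : List (Addr k))) := by
  by_cases hpre : (r : List (Addr k)) <+: b
  · right
    obtain ⟨c, d, hbd, hcu⟩ := node_ext hg hgr hb hpre hbr
    refine ⟨c, d, hbd, hcu, ?_⟩
    have h1 : (b : List (Addr k)).take (r : List (Addr k)).length = r :=
      prefix_iff_take.mp hpre
    have h2 : (r : List (Addr k)).length < (b : List (Addr k)).length := by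
      rw [hbd]; simp
    rw [chiD_of_pos r ⟨h1, h2⟩]
    congr 1
    rw [hbd, drop_of_append]
  · left
    refine ⟨hpre, chiD_of_neg r ?_⟩
    rintro ⟨h1, _⟩
    exact hpre (prefix_iff_take.mpr h1)

variable (hus : ∀ c1 c2, c1 ∈ nodes u → c2 ∈ nodes u → c1 = c2)
  (hg : Valid g) (hgr : g r = u)

include hus hg hgr

theorem chiD_inj {b1 b2 : Addr (k + 1)}
    (hb1 : g b1 ≠ null) (hbr1 : b1 ≠ r) (hb2 : g b2 ≠ null) (hbr2 : b2 ≠ r)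
    (heq : chiD r b1 = chiD r b2) : b1 = b2 := by
  rcases chiD_node_cases hg hgr hb1 hbr1 with ⟨hp1, he1⟩ | ⟨c1, d1, hd1, hc1, he1⟩ <;>
    rcases chiD_node_cases hg hgr hb2 hbr2 with ⟨hp2, he2⟩ | ⟨c2, d2, hd2, hc2, he2⟩
  · rw [← he1, heq, he2]
  · exfalso
    rw [he1, he2] at heq
    exact hp1 (heq ▸ ⟨d2, rfl⟩)
  · exfalso
    rw [he1, he2] at heq
    exact hp2 (heq.symm ▸ ⟨d1, rfl⟩)
  · rw [he1, he2] at heq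
    have hdd : d1 = d2 := List.append_cancel_left heq
    rw [hd1, hd2, hus c1 c2 hc1 hc2, hdd]

theorem psub_deg_eval_old (hnall : ¬ ∀ b, g b ≠ null → b = r)
    {b : Addr (k + 1)} (hb : g b ≠ null) (hbr : b ≠ r) :
    (psub (nd g) r (degen w) Υ).srcFn (chiD r b) = g b := by
  show ((if ∀ b, g b ≠ null → b = r then (degen w : PreOp (k + 2)) else nd (fun a =>
      if h : ∃ b, b ≠ r ∧ g b ≠ null ∧ chiD r b = a then g (Classical.choose h)
      else null)) : PreOp (k + 2)).srcFn (chiD r b) = g b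
  rw [if_neg hnall, srcFn_nd]
  have hw : ∃ b', b' ≠ r ∧ g b' ≠ null ∧ chiD r b' = chiD r b := ⟨b, hbr, hb, rfl⟩
  rw [dif_pos hw]
  have hsp := Classical.choose_spec hw
  have : Classical.choose hw = b :=
    chiD_inj hus hg hgr hsp.2.1 hsp.1 hb hbr hsp.2.2
  rw [this]

omit hus hg hgr

theorem psub_deg_eval_none (hnall : ¬ ∀ b, g b ≠ null → b = r)
    {a : Addr (k + 1)} (hne : (psub (nd g) r (degen w) Υ).srcFn a ≠ null) :
    ∃ b, b ≠ r ∧ g b ≠ null ∧ chiD r b = a := by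
  have hd : psub (nd g) r (degen w) Υ = (if ∀ b, g b ≠ null → b = r
      then (degen w : PreOp (k + 2)) else nd (fun a =>
      if h : ∃ b, b ≠ r ∧ g b ≠ null ∧ chiD r b = a then g (Classical.choose h)
      else null)) := rfl
  rw [hd, if_neg hnall, srcFn_nd] at hne
  by_cases h : ∃ b, b ≠ r ∧ g b ≠ null ∧ chiD r b = a
  · exact h
  · rw [dif_neg h] at hne; exact absurd rfl hne

theorem psub_deg_all (hall : ∀ b, g b ≠ null → b = r) :
    psub (nd g) r (degen w) Υ = degen w := by
  have hd : psub (nd g) r (degen w) Υ = (if ∀ b, g b ≠ null → b = r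
      then (degen w : PreOp (k + 2)) else nd (fun a =>
      if h : ∃ b, b ≠ r ∧ g b ≠ null ∧ chiD r b = a then g (Classical.choose h)
      else null)) := rfl
  rw [hd, if_pos hall]

end psubDeg

/-! ### More list decompositions -/

theorem append_concat_decomp {α : Type _} {a r s : List α} {c : α} (hs : s ≠ [])
    (h : a ++ [c] = r ++ s) : a = r ++ s.dropLast ∧ c = s.getLast hs := by
  have h2 : r ++ s = (r ++ s.dropLast) ++ [s.getLast hs] := by
    rw [List.append_assoc, List.dropLast_append_getLast hs]
  rw [h2] at h
  have := concat_inj (a := a) (a' := r ++ s.dropLast) (b := c) (b' := s.getLast hs)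
    (by simpa [List.concat_eq_append] using h)
  exact this

theorem eq_dropLast_getLast {α : Type _} {a r : List α} {c : α} (h : a ++ [c] = r) :
    a = r.dropLast ∧ ∃ hr : r ≠ [], c = r.getLast hr := by
  subst h
  exact ⟨List.dropLast_concat.symm, by simp, (List.getLast_concat).symm⟩

/-! ### Structure of the grafted preopetope -/

theorem graftI_valid {n : ℕ} {f : Addr (n + 1) → PreOp (n + 1)} (hv : Valid f)
    {l : Addr (n + 1)} (hl : l ∈ leaves (nd f)) {q : PreOp (n + 1)} (hq : q ≠ null) :
    Valid (fun a => if a = l then q else f a) := by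
  intro a c h
  have hfl : f l = null := leaves_nd_null hl
  by_cases hal : List.concat a c = l
  · have hd := dropLast_node_of_leaf hl
    have hane : a ≠ l := by
      intro he
      have hlen := congrArg List.length hal
      rw [he] at hlen
      simp [List.concat_eq_append] at hlen
    obtain ⟨h1, hne, h2⟩ := eq_dropLast_getLast (a := a) (c := c) (r := l)
      (by rw [← List.concat_eq_append]; exact hal)
    simp only [if_neg hane]
    refine ⟨?_, ?_⟩
    · rw [h1]; exact hd.1
    · have h2' : c = l.getLast (leaves_nd_ne_nil hl) := h2
      rw [h1, h2']
      exact hd.2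
  · simp only [if_neg hal] at h
    have hac := hv a c h
    have hane : a ≠ l := by
      intro he
      rw [he] at hac
      exact hac.1 hfl
    simp only [if_neg hane]
    exact hac

/-! ### Structure of the substituted target, non-degenerate case -/

section psubNdStruct

variable {k : ℕ} {Υ : Set (Addr (k + 1) × Addr k)} {r : Addr (k + 1)}
  {g : Addr (k + 1) → PreOp (k + 1)} {hq : Addr (k + 1) → PreOp (k + 1)}
  {u : PreOp (k + 1)}
  (HΥ1 : ∀ xy ∈ Υ, xy.1 ∈ leaves (nd hq : PreOp (k + 2)) ∧ xy.2 ∈ nodes u)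
  (HΥ2 : ∀ x ∈ leaves (nd hq : PreOp (k + 2)), ∃! c, (x, c) ∈ Υ)
  (HΥ3 : ∀ c ∈ nodes u, ∃! x : Addr (k + 1), (x, c) ∈ Υ)
  (hvq : Valid hq) (hrootq : hq ([] : List (Addr k)) ≠ null)
  (hg : Valid g) (hrootg : g ([] : List (Addr k)) ≠ null)
  (hgr : g r = u) (hr : g r ≠ null)

include HΥ1 HΥ2 HΥ3 hvq hg hgr hr

theorem psub_nd_valid : Valid ((psub (nd g) r (nd hq) Υ).srcFn) := by
  intro a c h
  rcases psub_nd_eval_none h with ⟨s, hs, heq⟩ | ⟨b, hbr, hb, heq⟩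
  · -- a ++ [c] lies in the region of `q`
    by_cases hsnil : s = []
    · -- a ++ [c] = r
      subst hsnil
      have heq' : (a : List (Addr k)) ++ [c] = r := by
        rw [← List.concat_eq_append, heq]; simp
      obtain ⟨h1, hrne, h2⟩ := eq_dropLast_getLast heq'
      have hlen : (a : List (Addr k)).length < (r : List (Addr k)).length := by
        have := congrArg List.length heq'
        simp at this; omega
      have hanode : g a ≠ null := by
        rw [h1]; exact hg.dc r hr _ (List.dropLast_prefix _)
      have har : a ≠ r := fun he => by rw [he] at hlen; omega
      have hFa := psub_nd_eval_old HΥ1 HΥ2 HΥ3 hvq hg hgr hanode har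
      rw [chiN_eq_self_of_short Υ r (le_of_lt hlen)] at hFa
      have hsrc := hg a c (by rw [List.concat_eq_append, heq']; exact hr)
      rw [hFa]
      exact ⟨hsrc.1, hsrc.2⟩
    · have heq' : (a : List (Addr k)) ++ [c] = (r : List (Addr k)) ++ s := by
        rw [← List.concat_eq_append, heq]; rfl
      obtain ⟨h1, h2⟩ := append_concat_decomp hsnil heq'
      have hdl := hvq s.dropLast (s.getLast hsnil)
        (by rw [List.concat_eq_append, List.dropLast_append_getLast hsnil]; exact hs)
      have hFa : (psub (nd g) r (nd hq) Υ).srcFn a = hq s.dropLast := by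
        rw [h1]; exact psub_nd_eval_new hdl.1
      rw [hFa, h2]
      exact ⟨hdl.1, hdl.2⟩
  · -- a ++ [c] is a rewritten node of `t`
    rcases chiN_node_cases HΥ1 HΥ3 hg hgr hb hbr with ⟨hp, he⟩ | ⟨c0, d, x, hd, hm, huniq, hlx, he⟩
    · rw [he] at heq
      have hgac := hg a c (heq ▸ hb)
      have har : a ≠ r := by
        rintro rfl
        exact hp (⟨[c], by rw [heq, List.concat_eq_append]⟩)
      have hnpa : ¬ (r : List (Addr k)) <+: a := fun hpa =>
        hp (hpa.trans (by rw [heq]; exact List.prefix_concat c a))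
      have hFa := psub_nd_eval_old HΥ1 HΥ2 HΥ3 hvq hg hgr hgac.1 har
      rw [chiN_eq_self_of_take_ne Υ r (fun ht => hnpa (prefix_iff_take.mpr ht))] at hFa
      rw [hFa]
      exact hgac
    · rw [he] at heq
      by_cases hdnil : d = []
      · subst hdnil
        have heq' : (a : List (Addr k)) ++ [c] = (r : List (Addr k)) ++ x := by
          rw [← List.concat_eq_append, ← heq]; simp
        obtain ⟨h1, h2⟩ := append_concat_decomp (leaves_nd_ne_nil hlx) heq'
        have hdd := dropLast_node_of_leaf hlx
        have hFa : (psub (nd g) r (nd hq) Υ).srcFn a = hq (x : List (Addr k)).dropLast := by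
          rw [h1]; exact psub_nd_eval_new hdd.1
        rw [hFa, h2]
        exact ⟨hdd.1, hdd.2⟩
      · have heq' : (a : List (Addr k)) ++ [c] =
            ((r : List (Addr k)) ++ x : List (Addr k)) ++ d := by
          rw [← List.concat_eq_append, ← heq]; try simp
        obtain ⟨h1, h2⟩ := append_concat_decomp hdnil heq'
        set b₀ : Addr (k + 1) := ((r : List (Addr k)) ++ c0 :: d.dropLast : List (Addr k))
          with hb₀
        have hb₀b : (b₀ : List (Addr k)) ++ [d.getLast hdnil] = b := by
          rw [hb₀, hd]
          simp only [List.append_assoc, List.cons_append]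
          rw [List.dropLast_append_getLast hdnil]
        have hgb₀ := hg b₀ (d.getLast hdnil)
          (by rw [List.concat_eq_append, hb₀b]; exact hb)
        have hb₀r : b₀ ≠ r := by
          intro he2
          have := congrArg List.length he2
          simp [hb₀] at this
        have hx2 : ∃ x' : Addr (k + 1), (x', c0) ∈ Υ := ⟨x, hm⟩
        have hchib₀ : chiN Υ r b₀ = a := by
          rw [hb₀]
          rw [chiN_eq_of_mem Υ r d.dropLast hx2]
          rw [huniq _ (Classical.choose_spec hx2), h1]
          try simp [List.append_assoc]
        have hFa := psub_nd_eval_old HΥ1 HΥ2 HΥ3 hvq hg hgr hgb₀.1 hb₀r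
        rw [hchib₀] at hFa
        rw [hFa, h2]
        exact hgb₀
  
omit hr

include hrootq hrootg

theorem psub_nd_root : (psub (nd g) r (nd hq) Υ).srcFn ([] : List (Addr k)) ≠ null := by
  by_cases hrnil : r = ([] : List (Addr k))
  · subst hrnil
    have h2 := psub_nd_eval_new (g := g) (Υ := Υ) (r := ([] : List (Addr k))) (s := []) hrootq
    have h3 : ((nd g).psub ([] : List (Addr k)) (nd hq) Υ).srcFn ([] : List (Addr k)) = hq [] := h2
    rw [h3]
    exact hrootq
  · have hne : ([] : List (Addr k)) ≠ r := fun he => hrnil he.symm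
    have hFa := psub_nd_eval_old HΥ1 HΥ2 HΥ3 hvq hg hgr hrootg hne
    rw [chiN_eq_self_of_short Υ r (by simp)] at hFa
    rw [hFa]
    exact hrootg

end psubNdStruct

/-! ### Structure of the substituted target, degenerate case -/

theorem mem_leaves_degen {k : ℕ} {w : PreOp k} {x : Addr (k + 1)} :
    x ∈ leaves (degen w : PreOp (k + 2)) ↔ x = ([] : List (Addr k)) := by
  show x ∈ ({Addr.eps (k + 1)} : Set (Addr (k + 1))) ↔ _
  simp [Set.mem_singleton_iff]
  rfl

section psubDegStruct

variable {k : ℕ} {Υ : Set (Addr (k + 1) × Addr k)} {r : Addr (k + 1)}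
  {g : Addr (k + 1) → PreOp (k + 1)} {w : PreOp k} {u : PreOp (k + 1)}

theorem hus_of_degen
    (HΥ1 : ∀ xy ∈ Υ, xy.1 ∈ leaves (degen w : PreOp (k + 2)) ∧ xy.2 ∈ nodes u)
    (HΥ2 : ∀ x ∈ leaves (degen w : PreOp (k + 2)), ∃! c, (x, c) ∈ Υ) :
    ∀ c1 c2, c1 ∈ nodes u → c2 ∈ nodes u →
      (∃ x1, (x1, c1) ∈ Υ) → (∃ x2, (x2, c2) ∈ Υ) → c1 = c2 := by
  rintro c1 c2 _ _ ⟨x1, hx1⟩ ⟨x2, hx2⟩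
  have he1 : x1 = ([] : List (Addr k)) := mem_leaves_degen.mp (HΥ1 _ hx1).1
  have he2 : x2 = ([] : List (Addr k)) := mem_leaves_degen.mp (HΥ1 _ hx2).1
  subst he1; subst he2
  obtain ⟨c0, _, hc0u⟩ := HΥ2 _ (mem_leaves_degen.mpr rfl)
  rw [hc0u _ hx1, hc0u _ hx2]

variable (hus : ∀ c1 c2, c1 ∈ nodes u → c2 ∈ nodes u → c1 = c2)
  (hg : Valid g) (hrootg : g ([] : List (Addr k)) ≠ null)
  (hgr : g r = u) (hr : g r ≠ null)
  (hnall : ¬ ∀ b, g b ≠ null → b = r)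

include hus hg hgr hr hnall

theorem psub_deg_valid : Valid ((psub (nd g) r (degen w) Υ).srcFn) := by
  have hus' : ∀ c1 c2, c1 ∈ nodes u → c2 ∈ nodes u → c1 = c2 := fun c1 c2 h1 h2 =>
    hus c1 c2 h1 h2
  intro a c h
  obtain ⟨b, hbr, hb, heq⟩ := psub_deg_eval_none hnall h
  rcases chiD_node_cases hg hgr hb hbr with ⟨hp, he⟩ | ⟨c0, d, hd, hc0, he⟩
  · rw [he] at heq
    have hgac := hg a c (heq ▸ hb)
    have har : a ≠ r := by
      rintro rfl
      exact hp ⟨[c], by rw [heq, List.concat_eq_append]⟩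
    have hnpa : ¬ (r : List (Addr k)) <+: a := fun hpa =>
      hp (hpa.trans (by rw [heq]; exact List.prefix_concat c a))
    have hFa := psub_deg_eval_old (w := w) (Υ := Υ) hus hg hgr hnall hgac.1 har
    rw [chiD_of_neg r (fun hcond => hnpa (prefix_iff_take.mpr hcond.1))] at hFa
    rw [hFa]
    exact hgac
  · rw [he] at heq
    by_cases hdnil : d = []
    · subst hdnil
      have heq' : (a : List (Addr k)) ++ [c] = r := by
        rw [← List.concat_eq_append, ← heq]; simp
      obtain ⟨h1, hrne, h2⟩ := eq_dropLast_getLast heq'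
      have hlen : (a : List (Addr k)).length < (r : List (Addr k)).length := by
        have := congrArg List.length heq'
        simp at this; omega
      have hanode : g a ≠ null := by
        rw [h1]; exact hg.dc r hr _ (List.dropLast_prefix _)
      have har : a ≠ r := fun he2 => by rw [he2] at hlen; omega
      have hFa := psub_deg_eval_old (w := w) (Υ := Υ) hus hg hgr hnall hanode har
      rw [chiD_of_neg r (fun hcond => by omega)] at hFa
      have hsrc := hg a c (by rw [List.concat_eq_append, heq']; exact hr)
      rw [hFa]
      exact hsrc
    · have heq' : (a : List (Addr k)) ++ [c] = (r : List (Addr k)) ++ d := by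
        rw [← List.concat_eq_append, heq]
      obtain ⟨h1, h2⟩ := append_concat_decomp hdnil heq'
      set b₀ : Addr (k + 1) := ((r : List (Addr k)) ++ c0 :: d.dropLast : List (Addr k))
        with hb₀
      have hb₀b : (b₀ : List (Addr k)) ++ [d.getLast hdnil] = b := by
        rw [hb₀, hd]
        simp only [List.append_assoc, List.cons_append]
        rw [List.dropLast_append_getLast hdnil]
      have hgb₀ := hg b₀ (d.getLast hdnil)
        (by rw [List.concat_eq_append, hb₀b]; exact hb)
      have hb₀r : b₀ ≠ r := by
        intro he2
        have := congrArg List.length he2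
        simp [hb₀] at this
      have hchib₀ : chiD r b₀ = a := by
        rw [hb₀]
        rw [chiD_of_pos r ⟨take_of_append _ _, by simp⟩]
        rw [drop_of_append, h1]
      have hFa := psub_deg_eval_old (w := w) (Υ := Υ) hus hg hgr hnall hgb₀.1 hb₀r
      rw [hchib₀] at hFa
      rw [hFa, h2]
      exact hgb₀

include hrootg in
theorem psub_deg_root :
    (psub (nd g) r (degen w) Υ).srcFn ([] : List (Addr k)) ≠ null := by
  by_cases hrnil : r = ([] : List (Addr k))
  · subst hrnil
    push_neg at hnall
    obtain ⟨b, hb, hbne⟩ := hnall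
    obtain ⟨c0, d0, rfl⟩ := List.exists_cons_of_ne_nil hbne
    have hb1 : g ([c0] : List (Addr k)) ≠ null :=
      hg.dc _ hb _ ⟨d0, rfl⟩
    have hb1r : ([c0] : List (Addr k)) ≠ ([] : List (Addr k)) := by simp
    have hFa := psub_deg_eval_old (w := w) (Υ := Υ) hus hg hgr
      (by push_neg; exact ⟨_, hb, hbne⟩) hb1 hb1r
    have hchi : chiD ([] : List (Addr k)) ([c0] : List (Addr k)) = ([] : List (Addr k)) := by
      rw [chiD_of_pos _ ⟨by simp, by simp⟩]
      simp
    rw [hchi] at hFa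
    rw [hFa]
    exact hb1
  · have hne : ([] : List (Addr k)) ≠ r := fun he => hrnil he.symm
    have hFa := psub_deg_eval_old (w := w) (Υ := Υ) hus hg hgr hnall hrootg hne
    rw [chiD_of_neg r (by simp)] at hFa
    rw [hFa]
    exact hrootg

end psubDegStruct

/-! ### Connector lemmas -/

theorem srcFn_null {n : ℕ} (a : Addr n) : (null : PreOp (n + 1)).srcFn a = null := rfl

theorem srcFn_degen {n : ℕ} (w : PreOp n) (a : Addr (n + 1)) :
    (degen w : PreOp (n + 2)).srcFn a = null := rfl

theorem ne_null_of_srcFn {n : ℕ} {p : PreOp (n + 1)} {a : Addr n}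
    (h : p.srcFn a ≠ null) : p ≠ null := fun hn => h (by rw [hn]; rfl)

theorem exists_nd_of_srcFn {n : ℕ} {p : PreOp (n + 1)} {a : Addr n}
    (h : p.srcFn a ≠ null) : ∃ f, p = nd f := by
  cases p with
  | null => exact absurd rfl h
  | nd f => exact ⟨f, rfl⟩
  | degen w => exact absurd rfl h

theorem srcFn_corolla {n : ℕ} (p : PreOp n) (a : Addr n) :
    (corolla p).srcFn a = if a = Addr.eps n then p else null := rfl

theorem mem_nodes_corolla {n : ℕ} {p : PreOp n} (hp : p ≠ null) (a : Addr n) :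
    a ∈ nodes (corolla p) ↔ a = Addr.eps n := by
  show (corolla p).srcFn a ≠ null ↔ _
  rw [srcFn_corolla]
  by_cases h : a = Addr.eps n
  · simp [h, hp]
  · simp [h]

theorem leaves_corolla {n : ℕ} (p : PreOp (n + 1)) (hp : p ≠ null) (x : Addr (n + 1)) :
    x ∈ leaves (corolla p : PreOp (n + 2)) ↔ ∃ b ∈ nodes p, x = [b] := by
  show x ∈ leaves (nd _) ↔ _
  rw [mem_leaves_nd]
  constructor
  · rintro ⟨a, b, ha, hb, hx, hnull⟩
    have hae : a = Addr.eps (n + 1) := by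
      by_contra hne
      rw [if_neg hne] at ha
      exact ha rfl
    rw [hae, if_pos rfl] at hb
    refine ⟨b, hb, ?_⟩
    rw [hx, hae]
    rfl
  · rintro ⟨b, hb, rfl⟩
    refine ⟨Addr.eps (n + 1), b, ?_, ?_, rfl, ?_⟩
    · rw [if_pos rfl]; exact hp
    · rw [if_pos rfl]; exact hb
    · exact if_neg (fun h => List.cons_ne_nil b [] (by exact h))

theorem edge_concat {m : ℕ} (f : Addr (m + 1) → PreOp (m + 1)) (a : Addr (m + 1))
    (b : Addr m) : edge (nd f) (List.concat a b) = (f a).srcFn b := by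
  unfold PreOp.edge
  rw [List.concat_eq_append]
  rw [List.getLast?_concat]
  rw [List.dropLast_concat]
  rfl

theorem edge_nil {m : ℕ} (p : PreOp (m + 2)) : edge p ([] : Addr (m + 1)) = null := rfl

theorem mot_good : ∀ {n : ℕ} {Γ : LCtx n} {p : PreOp n} {t : Tgt n},
    Mot n Γ p t → GoodP p
  | 0, _, _, _, h => h
  | 1, _, _, _, h => h.1
  | _ + 2, _, _, _, h => h.1

theorem mot_tgt_good : ∀ {n : ℕ} {Γ : LCtx (n + 1)} {p : PreOp (n + 1)} {t : PreOp n},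
    Mot (n + 1) Γ p t → GoodP t
  | 0, _, _, _, h => h.2
  | _ + 1, _, _, _, h => h.2.1

theorem mot_tgt_ne : ∀ {n : ℕ} {Γ : LCtx (n + 1)} {p : PreOp (n + 1)} {t : PreOp n},
    Mot (n + 1) Γ p t → t ≠ null := fun h => (mot_tgt_good h).ne_null

theorem goodP_degen {n : ℕ} (w : PreOp n) : GoodP (degen w : PreOp (n + 2)) :=
  ⟨degen_ne_null _, fun _ hf => absurd hf (fun h => by cases h)⟩

theorem goodP_corolla {n : ℕ} {p : PreOp (n + 1)} (hp : p ≠ null) :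
    GoodP (corolla p : PreOp (n + 2)) := by
  refine ⟨corolla_ne_null _, fun f hf => ?_⟩
  have hfe : (corolla p).srcFn = f := by rw [hf]; rfl
  constructor
  · rw [← hfe, srcFn_corolla, if_pos rfl]; exact hp
  · intro a b h
    rw [← hfe, srcFn_corolla] at h
    rw [if_neg (fun hc => concat_ne_nil a b (by exact hc))] at h
    exact absurd rfl h

theorem mem_rewriteCtx {k : ℕ} (Υ : LCtx (k + 2)) (r : Addr (k + 1))
    (Γ : Set (Addr (k + 2) × Addr (k + 1))) (ab : Addr (k + 2) × Addr (k + 1)) :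
    ab ∈ rewriteCtx Υ r Γ ↔ ∃ xy ∈ Γ, ab = (xy.1, chiN Υ r xy.2) := Iff.rfl

/-- The graft case of the main induction. -/
theorem graft_mot {m : ℕ} {Γ : Set (Addr (m + 1) × Addr m)} {p : PreOp (m + 2)}
    {t : PreOp (m + 1)} {l : Addr (m + 1)} {r : Addr m} {q : PreOp (m + 1)}
    {Υ : LCtx (m + 1)} {u : PreOp m}
    (ih1 : Mot (m + 2) (insert (l, r) Γ) p t) (hnot : (l, r) ∉ Γ)
    (ih2 : Mot (m + 1) Υ q u) (he : edge p l = u) :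
    Mot (m + 2)
      (rewriteCtx Υ r Γ ∪ {ab | ∃ s ∈ q.nodes, ab = (List.concat l s, Addr.cat r s)})
      (p.graftI l q) (psub t r q Υ) := by
  obtain ⟨hGp, hGt, hB1, hB2, hB3, hEC⟩ := ih1
  have hlr : (l, r) ∈ insert (l, r) Γ := Set.mem_insert _ _
  have hlp : l ∈ leaves p := (hB1 _ hlr).1
  have hrt : r ∈ nodes t := (hB1 _ hlr).2
  obtain ⟨g, rfl⟩ := exists_nd_of_srcFn hrt
  have hqne : q ≠ null := (mot_good ih2).ne_null
  have hune : u ≠ null := mot_tgt_ne ih2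
  cases p with
  | null => exact absurd rfl hGp.1
  | degen w' =>
    exfalso
    have hl0 : l = ([] : List (Addr m)) := mem_leaves_degen.mp hlp
    rw [hl0, edge_nil] at he
    exact hune he.symm
  | nd f =>
  have hvrf := hGp.2 f rfl
  have hrootf : f (Addr.eps (m + 1)) ≠ null := hvrf.1
  have hvf : Valid f := hvrf.2
  have hfl : f l = null := leaves_nd_null hlp
  have hlnil : l ≠ ([] : List (Addr m)) := leaves_nd_ne_nil hlp
  have hgr_u : g r = u := by
    have h0 := hEC l r hlr f rfl
    rw [he] at h0
    exact h0
  have hΓ : ∀ x y, (x, y) ∈ Γ →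
      x ∈ leaves (nd f : PreOp (m + 2)) ∧ x ≠ l ∧ g y ≠ null ∧ y ≠ r := by
    intro x y hxy
    have hins : (x, y) ∈ insert (l, r) Γ := Set.mem_insert_of_mem _ hxy
    have h1 := hB1 _ hins
    have hxl : x ≠ l := by
      rintro rfl
      obtain ⟨y0, _, hy0u⟩ := hB2 x h1.1
      rw [hy0u y hins, ← hy0u r hlr] at hxy
      exact hnot hxy
    have hyr : y ≠ r := by
      rintro rfl
      obtain ⟨x0, _, hx0u⟩ := hB3 y h1.2
      rw [hx0u x hins, ← hx0u l hlr] at hxy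
      exact hnot hxy
    exact ⟨h1.1, hxl, h1.2, hyr⟩
  have hlg := leaves_graftI hvf hlp hqne
  have hGg : GoodP ((nd f : PreOp (m + 2)).graftI l q) := by
    refine ⟨by rw [graftI_nd]; exact nd_ne_null _, fun f0 hf0 => ?_⟩
    have hfe : ((nd f : PreOp (m + 2)).graftI l q).srcFn = f0 := by rw [hf0]; rfl
    rw [← hfe]
    constructor
    · show (if (Addr.eps (m + 1) : Addr (m + 1)) = l then q else f (Addr.eps (m + 1))) ≠ null
      rw [if_neg (fun hc => hlnil hc.symm)]
      exact hrootf
    · exact graftI_valid hvf hlp hqne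
  have hnotleaf : ∀ s : Addr m, List.concat l s ∉ leaves (nd f : PreOp (m + 2)) := by
    intro s hmem
    have h1 := (dropLast_node_of_leaf hmem).1
    rw [List.concat_eq_append, List.dropLast_concat] at h1
    exact h1 hfl
  have hedge_eq : ∀ x0, x0 ∈ leaves (nd f : PreOp (m + 2)) →
      ((nd f : PreOp (m + 2)).graftI l q).edge x0 = (nd f : PreOp (m + 2)).edge x0 := by
    intro x0 hx0
    obtain ⟨a0, b0, ha0, hb0, hx0e, _⟩ := hx0
    rw [hx0e]
    show edge (nd fun a => if a = l then q else f a) (List.concat a0 b0) = _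
    rw [edge_concat, edge_concat]
    have ha0l : a0 ≠ l := fun hc => ha0 (hc ▸ hfl)
    rw [if_neg ha0l]
  cases m with
  | zero =>
    have hq0 : q = corolla point := mot_good ih2
    have hqnode : ∀ s : Addr 0, q.srcFn s ≠ null := by
      intro s
      rw [hq0, srcFn_corolla, if_pos (show s = Addr.eps 0 from rfl)]
      exact fun hc => by cases hc
    have hΓempty : ∀ x y, (x, y) ∉ Γ := fun x y hxy => (hΓ x y hxy).2.2.2 rfl
    have hleaf_eq : ∀ x ∈ leaves (nd f : PreOp 2), x = l := by
      intro x hx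
      obtain ⟨y, hy, _⟩ := hB2 x hx
      have hxr : (x, r) ∈ insert (l, r) Γ := by
        have : y = r := rfl
        rwa [this] at hy
      obtain ⟨x0, _, hx0u⟩ := hB3 r hrt
      rw [hx0u x hxr, ← hx0u l hlr]
    refine ⟨hGg, mot_good ih2, ?_, ?_, ?_, ?_⟩
    · rintro ⟨x, y⟩ (hL | ⟨s, hs, heq⟩)
      · exact absurd hL (hΓempty x y)
      · have hx : x = List.concat l s := congrArg Prod.fst heq
        constructor
        · exact (hlg x).mpr (Or.inr ⟨s, hs, hx⟩)
        · show ((nd g : PreOp 1).psub r q Υ).srcFn y ≠ null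
          exact hqnode y
    · intro x hx
      rcases (hlg x).mp hx with ⟨hxp, hxl⟩ | ⟨s, hs, rfl⟩
      · exact absurd (hleaf_eq x hxp) hxl
      · refine ⟨Addr.cat r s, Or.inr ⟨s, hs, rfl⟩, fun y' _ => rfl⟩
    · intro y hy
      refine ⟨List.concat l y, Or.inr ⟨y, hqnode y, rfl⟩, ?_⟩
      rintro x' (hL | ⟨s', hs', heq⟩)
      · exact absurd hL (hΓempty x' y)
      · exact congrArg Prod.fst heq
    · rintro x y (hL | ⟨s, hs, heq⟩) f0 hf0
      · exact absurd hL (hΓempty x y)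
      · have hx : x = List.concat l s := congrArg Prod.fst heq
        rw [hx]
        show q.srcFn y = edge (nd fun a => if a = l then q else f a) (List.concat l s)
        rw [edge_concat]
        show q.srcFn y = (if l = l then q else f l).srcFn s
        rw [if_pos rfl]
  | succ k =>
    obtain ⟨hGq, hGu, HY1, HY2, HY3, _⟩ := ih2
    have hrvg := hGt.2 g rfl
    have hrootg : g (Addr.eps (k + 1)) ≠ null := hrvg.1
    have hvg : Valid g := hrvg.2
    cases q with
    | null => exact absurd rfl hqne
    | nd hq =>
      have hrvq := hGq.2 hq rfl
      have hrootq : hq (Addr.eps (k + 1)) ≠ null := hrvq.1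
      have hvq : Valid hq := hrvq.2
      have hval_old : ∀ b, g b ≠ null → b ≠ r →
          (psub (nd g) r (nd hq) Υ).srcFn (chiN Υ r b) = g b := fun b hb hbr =>
        psub_nd_eval_old HY1 HY2 HY3 hvq hvg hgr_u hb hbr
      have hac : ∀ x1 x2, x1 ∈ leaves (nd hq : PreOp (k + 2)) →
          x2 ∈ leaves (nd hq : PreOp (k + 2)) → (x1 : List (Addr k)) <+: x2 → x1 = x2 :=
        fun x1 x2 h1 h2 hp => leaves_antichain hvq h1 h2 hp
      have hln : ∀ x s, x ∈ leaves (nd hq : PreOp (k + 2)) → (nd hq : PreOp (k + 2)).srcFn s ≠ null →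
          ¬ (x : List (Addr k)) <+: s := fun x s hx hs => leaf_not_prefix_node hvq hx hs
      have havoid : ∀ b, g b ≠ null → b ≠ r → ∀ s, hq s ≠ null →
          chiN Υ r b ≠ ((r : List (Addr k)) ++ s : List (Addr k)) := fun b hb hbr s hs =>
        chiN_avoid HY1 HY3 hln hvg hgr_u hb hbr (s := s) hs
      have hinj : ∀ b1 b2, g b1 ≠ null → b1 ≠ r → g b2 ≠ null → b2 ≠ r →
          chiN Υ r b1 = chiN Υ r b2 → b1 = b2 := fun b1 b2 h1 h1r h2 h2r hee =>
        chiN_inj HY1 HY2 HY3 hac hvg hgr_u h1 h1r h2 h2r hee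
      have hGpsub : GoodP (psub (nd g : PreOp (k + 2)) r (nd hq) Υ) := by
        have hroot := psub_nd_root HY1 HY2 HY3 hvq hrootq hvg hrootg hgr_u
        refine ⟨ne_null_of_srcFn hroot, fun f0 hf0 => ?_⟩
        have hfe : (psub (nd g : PreOp (k + 2)) r (nd hq) Υ).srcFn = f0 := by rw [hf0]; rfl
        rw [← hfe]
        exact ⟨hroot, psub_nd_valid HY1 HY2 HY3 hvq hvg hgr_u hrt⟩
      refine ⟨hGg, hGpsub, ?_, ?_, ?_, ?_⟩
      · rintro ⟨x, y⟩ (hL | ⟨s, hs, heq⟩)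
        · obtain ⟨⟨x0, y0⟩, h0, heq⟩ := (mem_rewriteCtx Υ r Γ _).mp hL
          have hx : x = x0 := congrArg Prod.fst heq
          have hy : y = chiN Υ r y0 := congrArg Prod.snd heq
          obtain ⟨hx0p, hx0l, hy0n, hy0r⟩ := hΓ x0 y0 h0
          constructor
          · exact (hlg x).mpr (Or.inl ⟨hx ▸ hx0p, hx ▸ hx0l⟩)
          · show (psub (nd g : PreOp (k + 2)) r (nd hq) Υ).srcFn y ≠ null
            rw [hy, hval_old y0 hy0n hy0r]
            exact hy0n
        · have hx : x = List.concat l s := congrArg Prod.fst heq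
          have hy : y = Addr.cat r s := congrArg Prod.snd heq
          constructor
          · exact (hlg x).mpr (Or.inr ⟨s, hs, hx⟩)
          · show (psub (nd g : PreOp (k + 2)) r (nd hq) Υ).srcFn y ≠ null
            rw [hy]
            have hh := psub_nd_eval_new (g := g) (r := r) (Υ := Υ) (hq := hq) (s := s)
              (show hq s ≠ null from hs)
            rw [show (Addr.cat r s : Addr (k + 1)) = List.append r s from rfl, hh]
            exact hs
      · intro x hx
        rcases (hlg x).mp hx with ⟨hxp, hxl⟩ | ⟨s, hs, rfl⟩
        · obtain ⟨y, hy, hyu⟩ := hB2 x hxp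
          have hyΓ : (x, y) ∈ Γ := by
            rcases Set.mem_insert_iff.mp hy with hh | hh
            · exact absurd (congrArg Prod.fst hh) hxl
            · exact hh
          obtain ⟨_, _, hyn, hyr⟩ := hΓ x y hyΓ
          refine ⟨chiN Υ r y, Or.inl ((mem_rewriteCtx Υ r Γ _).mpr ⟨(x, y), hyΓ, rfl⟩), ?_⟩
          rintro y' (hL | ⟨s, hs, heq⟩)
          · obtain ⟨⟨x0, y0⟩, h0, heq⟩ := (mem_rewriteCtx Υ r Γ _).mp hL
            have hx0 : x = x0 := congrArg Prod.fst heq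
            have hy0 : y' = chiN Υ r y0 := congrArg Prod.snd heq
            have : y0 = y := hyu y0 (Set.mem_insert_of_mem _ (hx0 ▸ h0))
            rw [hy0, this]
          · have hxe : x = List.concat l s := congrArg Prod.fst heq
            exact absurd (hxe ▸ hxp) (hnotleaf s)
        · refine ⟨Addr.cat r s, Or.inr ⟨s, hs, rfl⟩, ?_⟩
          rintro y' (hL | ⟨s', hs', heq⟩)
          · obtain ⟨⟨x0, y0⟩, h0, heq⟩ := (mem_rewriteCtx Υ r Γ _).mp hL
            have hx0 : List.concat l s = x0 := congrArg Prod.fst heq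
            exact absurd (hx0 ▸ (hΓ x0 y0 h0).1) (hnotleaf s)
          · have h1 : List.concat l s = List.concat l s' := congrArg Prod.fst heq
            have h2 : y' = Addr.cat r s' := congrArg Prod.snd heq
            rw [h2, (concat_inj h1).2]
      · intro y hy
        have hy' : (psub (nd g : PreOp (k + 2)) r (nd hq) Υ).srcFn y ≠ null := hy
        rcases psub_nd_eval_none hy' with ⟨s, hs, rfl⟩ | ⟨b, hbr, hb, rfl⟩
        · refine ⟨List.concat l s, Or.inr ⟨s, hs, rfl⟩, ?_⟩
          rintro x' (hL | ⟨s', hs', heq⟩)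
          · obtain ⟨⟨x0, y0⟩, h0, heq⟩ := (mem_rewriteCtx Υ r Γ _).mp hL
            have h2 : List.append r s = chiN Υ r y0 := congrArg Prod.snd heq
            obtain ⟨_, _, hy0n, hy0r⟩ := hΓ x0 y0 h0
            exact absurd h2.symm (havoid y0 hy0n hy0r s hs)
          · have h2 : List.append r s = Addr.cat r s' := congrArg Prod.snd heq
            have hss : s = s' := List.append_cancel_left (by exact h2)
            have h1 : x' = List.concat l s' := congrArg Prod.fst heq
            rw [h1, hss]
        · obtain ⟨x0, hx0, hx0u⟩ := hB3 b hb
          have hx0Γ : (x0, b) ∈ Γ := by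
            rcases Set.mem_insert_iff.mp hx0 with hh | hh
            · exact absurd (congrArg Prod.snd hh) hbr
            · exact hh
          refine ⟨x0, Or.inl ((mem_rewriteCtx Υ r Γ _).mpr ⟨(x0, b), hx0Γ, rfl⟩), ?_⟩
          rintro x' (hL | ⟨s', hs', heq⟩)
          · obtain ⟨⟨x1, y1⟩, h1, heq⟩ := (mem_rewriteCtx Υ r Γ _).mp hL
            have ha : x' = x1 := congrArg Prod.fst heq
            have hby : chiN Υ r b = chiN Υ r y1 := congrArg Prod.snd heq
            obtain ⟨_, _, hy1n, hy1r⟩ := hΓ x1 y1 h1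
            have : y1 = b := hinj y1 b hy1n hy1r hb hbr hby.symm
            rw [ha]
            exact hx0u x1 (Set.mem_insert_of_mem _ (this ▸ h1))
          · have h2 : chiN Υ r b = Addr.cat r s' := congrArg Prod.snd heq
            exact absurd h2 (havoid b hb hbr s' hs')
      · rintro x y (hL | ⟨s, hs, heq⟩) f0 hf0
        · obtain ⟨⟨x0, y0⟩, h0, heq⟩ := (mem_rewriteCtx Υ r Γ _).mp hL
          have hx : x = x0 := congrArg Prod.fst heq
          have hy : y = chiN Υ r y0 := congrArg Prod.snd heq
          obtain ⟨hx0p, hx0l, hy0n, hy0r⟩ := hΓ x0 y0 h0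
          show (psub (nd g : PreOp (k + 2)) r (nd hq) Υ).srcFn y = _
          rw [hy, hval_old y0 hy0n hy0r, hx, hedge_eq x0 hx0p]
          have := hEC x0 y0 (Set.mem_insert_of_mem _ h0) f rfl
          exact this
        · have hx : x = List.concat l s := congrArg Prod.fst heq
          have hy : y = Addr.cat r s := congrArg Prod.snd heq
          rw [hx]
          show (psub (nd g : PreOp (k + 2)) r (nd hq) Υ).srcFn y =
            edge (nd fun a => if a = l then (nd hq : PreOp (k + 2)) else f a) (List.concat l s)
          rw [edge_concat]
          show _ = (if l = l then (nd hq : PreOp (k + 2)) else f l).srcFn s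
          rw [if_pos rfl]
          show _ = hq s
          rw [hy]
          have hh := psub_nd_eval_new (g := g) (r := r) (Υ := Υ) (hq := hq) (s := s)
            (show hq s ≠ null from hs)
          rw [show (Addr.cat r s : Addr (k + 1)) = List.append r s from rfl, hh]
    | degen w =>
      have hus' : ∀ c1 c2, c1 ∈ nodes u → c2 ∈ nodes u → c1 = c2 := fun c1 c2 h1 h2 =>
        hus_of_degen HY1 HY2 c1 c2 h1 h2 (HY3 c1 h1).exists (HY3 c2 h2).exists
      have hchiND : ∀ b, g b ≠ null → b ≠ r → chiN Υ r b = chiD r b := by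
        intro b hb hbr
        rcases chiD_node_cases hvg hgr_u hb hbr with ⟨hp, he⟩ | ⟨c, d, hd, hcu, he⟩
        · rw [he, chiN_eq_self_of_take_ne Υ r (fun ht => hp (prefix_iff_take.mpr ht))]
        · rw [he, hd]
          have hx : ∃ x : Addr (k + 1), (x, c) ∈ Υ := (HY3 c hcu).exists
          rw [chiN_eq_of_mem Υ r d hx]
          have hce : Classical.choose hx = ([] : List (Addr k)) :=
            mem_leaves_degen.mp (HY1 _ (Classical.choose_spec hx)).1
          rw [hce]
          simp
      have hdegnode : ∀ s : Addr (k + 1), s ∉ nodes (degen w : PreOp (k + 2)) :=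
        fun s hs => hs rfl
      by_cases hall : ∀ b, g b ≠ null → b = r
      · have hpd : psub (nd g : PreOp (k + 2)) r (degen w) Υ = degen w :=
          psub_deg_all (Υ := Υ) (w := w) hall
        have hleaf_eq : ∀ x ∈ leaves (nd f : PreOp (k + 3)), x = l := by
          intro x hx
          obtain ⟨y, hy, _⟩ := hB2 x hx
          have hyn : g y ≠ null := (hB1 _ hy).2
          have hyr : y = r := hall y hyn
          obtain ⟨x0, _, hx0u⟩ := hB3 r hrt
          rw [hx0u x (hyr ▸ hy), ← hx0u l hlr]
        have hΓempty : ∀ x y, (x, y) ∈ Γ → False := fun x y hxy =>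
          (hΓ x y hxy).2.2.2 (hall y (hΓ x y hxy).2.2.1)
        refine ⟨hGg, by rw [hpd]; exact goodP_degen w, ?_, ?_, ?_, ?_⟩
        · rintro ⟨x, y⟩ (hL | ⟨s, hs, heq⟩)
          · obtain ⟨⟨x0, y0⟩, h0, _⟩ := (mem_rewriteCtx Υ r Γ _).mp hL
            exact absurd h0 (fun h => hΓempty x0 y0 h)
          · exact absurd hs (hdegnode s)
        · intro x hx
          rcases (hlg x).mp hx with ⟨hxp, hxl⟩ | ⟨s, hs, _⟩
          · exact absurd (hleaf_eq x hxp) hxl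
          · exact absurd hs (hdegnode s)
        · intro y hy
          exfalso
          have hy' : (psub (nd g : PreOp (k + 2)) r (degen w) Υ).srcFn y ≠ null := hy
          rw [hpd] at hy'
          exact hy' rfl
        · rintro x y (hL | ⟨s, hs, heq⟩) f0 hf0
          · obtain ⟨⟨x0, y0⟩, h0, _⟩ := (mem_rewriteCtx Υ r Γ _).mp hL
            exact absurd h0 (fun h => hΓempty x0 y0 h)
          · exact absurd hs (hdegnode s)
      · have hval_old : ∀ b, g b ≠ null → b ≠ r →
            (psub (nd g : PreOp (k + 2)) r (degen w) Υ).srcFn (chiD r b) = g b :=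
          fun b hb hbr => psub_deg_eval_old (Υ := Υ) (w := w) hus' hvg hgr_u hall hb hbr
        have hGpsub : GoodP (psub (nd g : PreOp (k + 2)) r (degen w) Υ) := by
          have hroot := psub_deg_root (Υ := Υ) (w := w) hus' hvg hrootg hgr_u hrt hall
          refine ⟨ne_null_of_srcFn hroot, fun f0 hf0 => ?_⟩
          have hfe : (psub (nd g : PreOp (k + 2)) r (degen w) Υ).srcFn = f0 := by
            rw [hf0]; rfl
          rw [← hfe]
          exact ⟨hroot, psub_deg_valid (Υ := Υ) (w := w) hus' hvg hgr_u hrt hall⟩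
        refine ⟨hGg, hGpsub, ?_, ?_, ?_, ?_⟩
        · rintro ⟨x, y⟩ (hL | ⟨s, hs, heq⟩)
          · obtain ⟨⟨x0, y0⟩, h0, heq⟩ := (mem_rewriteCtx Υ r Γ _).mp hL
            have hx : x = x0 := congrArg Prod.fst heq
            have hy : y = chiN Υ r y0 := congrArg Prod.snd heq
            obtain ⟨hx0p, hx0l, hy0n, hy0r⟩ := hΓ x0 y0 h0
            constructor
            · exact (hlg x).mpr (Or.inl ⟨hx ▸ hx0p, hx ▸ hx0l⟩)
            · show (psub (nd g : PreOp (k + 2)) r (degen w) Υ).srcFn y ≠ null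
              rw [hy, hchiND y0 hy0n hy0r, hval_old y0 hy0n hy0r]
              exact hy0n
          · exact absurd hs (hdegnode s)
        · intro x hx
          rcases (hlg x).mp hx with ⟨hxp, hxl⟩ | ⟨s, hs, _⟩
          · obtain ⟨y, hy, hyu⟩ := hB2 x hxp
            have hyΓ : (x, y) ∈ Γ := by
              rcases Set.mem_insert_iff.mp hy with hh | hh
              · exact absurd (congrArg Prod.fst hh) hxl
              · exact hh
            refine ⟨chiN Υ r y, Or.inl ((mem_rewriteCtx Υ r Γ _).mpr ⟨(x, y), hyΓ, rfl⟩), ?_⟩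
            rintro y' (hL | ⟨s, hs, heq⟩)
            · obtain ⟨⟨x0, y0⟩, h0, heq⟩ := (mem_rewriteCtx Υ r Γ _).mp hL
              have hx0 : x = x0 := congrArg Prod.fst heq
              have hy0 : y' = chiN Υ r y0 := congrArg Prod.snd heq
              have : y0 = y := hyu y0 (Set.mem_insert_of_mem _ (hx0 ▸ h0))
              rw [hy0, this]
            · exact absurd hs (hdegnode s)
          · exact absurd hs (hdegnode s)
        · intro y hy
          have hy' : (psub (nd g : PreOp (k + 2)) r (degen w) Υ).srcFn y ≠ null := hy
          obtain ⟨b, hbr', hb', rfl⟩ := psub_deg_eval_none hall hy'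
          obtain ⟨x0, hx0, hx0u⟩ := hB3 b hb'
          have hx0Γ : (x0, b) ∈ Γ := by
            rcases Set.mem_insert_iff.mp hx0 with hh | hh
            · exact absurd (congrArg Prod.snd hh) hbr'
            · exact hh
          refine ⟨x0, Or.inl ((mem_rewriteCtx Υ r Γ _).mpr ⟨(x0, b), hx0Γ, by
            rw [hchiND b hb' hbr']⟩), ?_⟩
          rintro x' (hL | ⟨s', hs', heq⟩)
          · obtain ⟨⟨x1, y1⟩, h1, heq⟩ := (mem_rewriteCtx Υ r Γ _).mp hL
            have ha : x' = x1 := congrArg Prod.fst heq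
            have hby : chiD r b = chiN Υ r y1 := congrArg Prod.snd heq
            obtain ⟨_, _, hy1n, hy1r⟩ := hΓ x1 y1 h1
            rw [hchiND y1 hy1n hy1r] at hby
            have : y1 = b := chiD_inj hus' hvg hgr_u hy1n hy1r hb' hbr' hby.symm
            rw [ha]
            exact hx0u x1 (Set.mem_insert_of_mem _ (this ▸ h1))
          · exact absurd hs' (hdegnode s')
        · rintro x y (hL | ⟨s, hs, heq⟩) f0 hf0
          · obtain ⟨⟨x0, y0⟩, h0, heq⟩ := (mem_rewriteCtx Υ r Γ _).mp hL
            have hx : x = x0 := congrArg Prod.fst heq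
            have hy : y = chiN Υ r y0 := congrArg Prod.snd heq
            obtain ⟨hx0p, hx0l, hy0n, hy0r⟩ := hΓ x0 y0 h0
            show (psub (nd g : PreOp (k + 2)) r (degen w) Υ).srcFn y = _
            rw [hy, hchiND y0 hy0n hy0r, hval_old y0 hy0n hy0r, hx, hedge_eq x0 hx0p]
            exact hEC x0 y0 (Set.mem_insert_of_mem _ h0) f rfl
          · exact absurd hs (hdegnode s)

theorem mot_of_derives : ∀ {n : ℕ} {Γ : LCtx n} {p : PreOp n} {t : Tgt n},
    Derives n Γ p t → Mot n Γ p t := by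
  intro n Γ p t h
  induction h with
  | point => exact rfl
  | @degen n Γ p t hd ih =>
    have hp : p ≠ null := (mot_good ih).ne_null
    refine ⟨goodP_degen p, ?_, ?_, ?_, ?_, ?_⟩
    · -- GoodP (corolla p) at index n + 1
      match n, p, hp with
      | 0, p, hp =>
        have : p = point := mot_good ih
        show GoodP (corolla p : PreOp 1)
        rw [this]; rfl
      | (n' + 1), p, hp => exact goodP_corolla hp
    · rintro ⟨x1, x2⟩ hx
      have hx' : ((x1, x2) : Addr (n + 1) × Addr n) = (Addr.eps (n + 1), Addr.eps n) :=
        Set.mem_singleton_iff.mp hx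
      have hh1 : x1 = Addr.eps (n + 1) := congrArg Prod.fst hx'
      have hh2 : x2 = Addr.eps n := congrArg Prod.snd hx'
      constructor
      · show x1 ∈ leaves (degen p : PreOp (n + 2))
        rw [hh1]
        exact mem_leaves_degen.mpr rfl
      · show x2 ∈ nodes (corolla p)
        rw [hh2, mem_nodes_corolla hp]
    · intro x hx
      have hx' : x = ([] : List (Addr n)) :=
        mem_leaves_degen.mp (by exact hx)
      refine ⟨Addr.eps n, ?_, ?_⟩
      · exact Set.mem_singleton_iff.mpr (by rw [hx']; rfl)
      · intro y hy
        exact congrArg Prod.snd (Set.mem_singleton_iff.mp hy)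
    · intro y hy
      have hy' : y = Addr.eps n := (mem_nodes_corolla hp y).mp hy
      refine ⟨Addr.eps (n + 1), ?_, ?_⟩
      · exact Set.mem_singleton_iff.mpr (by rw [hy'])
      · intro x hx
        exact congrArg Prod.fst (Set.mem_singleton_iff.mp hx)
    · intro x y _ f hf
      exact absurd hf (fun h => by cases h)
  | @shift0 Γ p t hd ih =>
    have hp : p = point := mot_good ih
    exact ⟨by rw [hp]; rfl, hp⟩
  | @shiftS n Γ p t hd ih =>
    have hp : p ≠ null := (mot_good ih).ne_null
    refine ⟨goodP_corolla hp, mot_good ih, ?_, ?_, ?_, ?_⟩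
    · rintro ⟨x1, x2⟩ hx
      obtain ⟨a, ha, hab⟩ := hx
      simp only [Prod.mk.injEq] at hab
      constructor
      · show x1 ∈ leaves (corolla p : PreOp (n + 2))
        rw [leaves_corolla p hp]
        exact ⟨a, ha, hab.1⟩
      · show x2 ∈ nodes p
        rw [hab.2]; exact ha
    · intro x hx
      obtain ⟨b, hb, hxb⟩ := (leaves_corolla p hp x).mp hx
      refine ⟨b, ⟨b, hb, by rw [hxb]⟩, ?_⟩
      intro y hy
      obtain ⟨a, _, hab⟩ := hy
      simp only [Prod.mk.injEq] at hab
      rw [hab.2]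
      rw [hxb] at hab
      exact (List.cons.injEq _ _ _ _ ▸ hab.1).1.symm
    · intro y hy
      refine ⟨[y], ⟨y, hy, rfl⟩, ?_⟩
      intro x hx
      obtain ⟨a, _, hab⟩ := hx
      simp only [Prod.mk.injEq] at hab
      rw [hab.1, hab.2]
    · rintro x y ⟨a, ha, hab⟩ f hf
      simp only [Prod.mk.injEq] at hab
      have hfe : (corolla p).srcFn = f := by rw [hf]; rfl
      rw [hab.1, hab.2]
      calc p.srcFn a = ((corolla p).srcFn ([] : List (Addr n))).srcFn a := by
            rw [srcFn_corolla, if_pos (show ([] : List (Addr n)) = Addr.eps (n + 1) from rfl)]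
        _ = (corolla p).edge [a] := (edge_concat ((corolla p).srcFn) [] a).symm
  | @graft m Γ p t l r q Υ u h1 hnot h2 he ih1 ih2 =>
    exact graft_mot ih1 hnot ih2 he

/-- **Statement 15** (Lemma 4.1.9).  Let `Γ ⊢ p → t` be a derivable sequent in the
unnamed system `OPT?` with `dim p ≥ 2`.  Then `Γ`, as a set of pairs, is the graph of a
bijection between the set `p⁺` of leaf addresses of `p` and the set `t•` of source
addresses of `t`. -/
theorem stmt15 {m : ℕ} {Γ : PreOp.LCtx (m + 2)} {p : PreOp (m + 2)} {t : PreOp (m + 1)}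
    (h : Derives (m + 2) Γ p t) :
    (∀ x ∈ (Γ : Set (Addr (m + 1) × Addr m)), x.1 ∈ PreOp.leaves p ∧ x.2 ∈ PreOp.nodes t) ∧
    (∀ l ∈ PreOp.leaves p, ∃! r, (l, r) ∈ (Γ : Set (Addr (m + 1) × Addr m))) ∧
    (∀ r ∈ PreOp.nodes t, ∃! l, (l, r) ∈ (Γ : Set (Addr (m + 1) × Addr m))) := by
  have hm := mot_of_derives h
  exact ⟨hm.2.2.1, hm.2.2.2.1, hm.2.2.2.2.1⟩
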